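/- Let n and k be positive integers, let A = {V^(1), …, V^(k)} ⊆ {−1/√n, 1/√n}^n, and let r ≥ 0. Then there exists a set cover(A) ⊆ {−1/√n, 1/√n}^n with |cover(A)| ≤ 2^{k²} such that every V ∈ {−1/√n, 1/√n}^n whose Euclidean distance to the linear span of A is at most r satisfies d_Ham(V, Y) ≤ r²·n for some Y ∈ cover(A). -/

import Mathlib

open Metric

/-- The scaled hypercube {−1/√n, 1/√n}^n as a subset of Euclidean space. -/
def scaledCube (n : ℕ) : Set (EuclideanSpace ℝ (Fin n)) :=
  {X | ∀ i, X i = 1 / Real.sqrt n ∨ X i = -(1 / Real.sqrt n)}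

noncomputable section

namespace Stmt13Aux

open Finset RealInnerProductSpace Module

variable {E : Type*} [NormedAddCommGroup E] [InnerProductSpace ℝ E]

/-- Generic sign patterns of the functionals `⟪·, c⟫`, `c ∈ C`, on the subspace `W`. -/
def genPat (C : Finset E) (W : Submodule ℝ E) : Set (E → Prop) :=
  {p | ∃ x ∈ W, (∀ c ∈ C, ⟪x, c⟫ ≠ 0) ∧ p = fun c => (c ∈ C ∧ 0 < ⟪x, c⟫)}

lemma genPat_finite (C : Finset E) (W : Submodule ℝ E) : (genPat C W).Finite := by
  have h : genPat C W ⊆ Set.range (fun (q : {c // c ∈ C} → Prop) (c : E) =>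
      ∃ h : c ∈ C, q ⟨c, h⟩) := by
    rintro p ⟨x, -, -, rfl⟩
    refine ⟨fun c => 0 < ⟪x, (c : E)⟫, ?_⟩
    funext c
    exact propext ⟨fun ⟨h1, h2⟩ => ⟨h1, h2⟩, fun ⟨h1, h2⟩ => ⟨h1, h2⟩⟩
  exact (Set.finite_range _).subset h

/-- The counting function. -/
def Fb (m d : ℕ) : ℕ := if m = 0 ∨ d = 0 then 1 else if d = 1 then 2 else 2 * m ^ (d - 1)

lemma one_le_pow_of_ne_zero {m e : ℕ} (hm : m ≠ 0) : 1 ≤ m ^ e :=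
  Nat.one_le_iff_ne_zero.mpr (pow_ne_zero _ hm)

lemma Fb_mono_right {m d d' : ℕ} (h : d ≤ d') : Fb m d ≤ Fb m d' := by
  unfold Fb
  split_ifs with h1 h2 h3 h4 h5 h6 <;>
    first
      | omega
      | (exfalso; omega)
      | (have hm : m ≠ 0 := by omega
         have := one_le_pow_of_ne_zero (e := d' - 1) hm
         omega)
      | (exact Nat.mul_le_mul_left 2 (Nat.pow_le_pow_right (by omega) (by omega)))

lemma Fb_mono_left {m m' d : ℕ} (h : m ≤ m') : Fb m d ≤ Fb m' d := by
  unfold Fb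
  split_ifs with h1 h2 h3 h4 h5 h6 <;>
    first
      | omega
      | (exfalso; omega)
      | (have hm : m' ≠ 0 := by omega
         have := one_le_pow_of_ne_zero (e := d - 1) hm
         omega)
      | (exact Nat.mul_le_mul_left 2 (Nat.pow_le_pow_left (by omega) _))

lemma Fb_zero_left (d : ℕ) : Fb 0 d = 1 := by simp [Fb]

lemma Fb_one_right {m : ℕ} (hm : m ≠ 0) : Fb m 1 = 2 := by simp [Fb, hm]

lemma Fb_of_two_le {m d : ℕ} (hm : m ≠ 0) (hd : 2 ≤ d) : Fb m d = 2 * m ^ (d - 1) := by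
  rw [Fb, if_neg (by omega : ¬ (m = 0 ∨ d = 0)), if_neg (by omega : ¬ d = 1)]

lemma Fb_rec {m d : ℕ} (hm : 1 ≤ m) (hd : 2 ≤ d) :
    Fb (m - 1) d + Fb (m - 1) (d - 1) ≤ Fb m d := by
  rcases Nat.eq_or_lt_of_le hm with h1 | h1
  · have hm1 : m = 1 := h1.symm
    subst hm1
    rw [show (1:ℕ) - 1 = 0 from rfl, Fb_zero_left, Fb_zero_left,
      Fb_of_two_le one_ne_zero hd, one_pow]
    omega
  · have hm1 : m - 1 ≠ 0 := by omega
    rcases Nat.eq_or_lt_of_le hd with h2 | h2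
    · have hd2 : d = 2 := h2.symm
      subst hd2
      rw [show (2:ℕ) - 1 = 1 from rfl, Fb_one_right hm1, Fb_of_two_le hm1 le_rfl,
        Fb_of_two_le (by omega : m ≠ 0) le_rfl, show (2:ℕ) - 1 = 1 from rfl,
        pow_one, pow_one]
      omega
    · obtain ⟨e, he⟩ : ∃ e, d - 1 = e + 1 := ⟨d - 2, by omega⟩
      have he2 : d - 1 - 1 = e := by omega
      rw [Fb_of_two_le hm1 hd, Fb_of_two_le hm1 (by omega : 2 ≤ d - 1),
        Fb_of_two_le (by omega : m ≠ 0) hd,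
        show d - 1 - 1 = e from he2, show d - 1 = e + 1 from he]
      have key : (m - 1) ^ (e + 1) + (m - 1) ^ e ≤ m ^ (e + 1) := by
        have hme : (m - 1) + 1 = m := by omega
        calc (m - 1) ^ (e + 1) + (m - 1) ^ e
            = (m - 1) ^ e * ((m - 1) + 1) := by rw [pow_succ]; ring
          _ = (m - 1) ^ e * m := by rw [hme]
          _ ≤ m ^ e * m := Nat.mul_le_mul_right m (Nat.pow_le_pow_left (by omega) _)
          _ = m ^ (e + 1) := (pow_succ m e).symm
      omega



theorem genPat_ncard_le [FiniteDimensional ℝ E] (C : Finset E) :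
    ∀ W : Submodule ℝ E, (genPat C W).ncard ≤ Fb C.card (finrank ℝ W) := by
  classical
  induction C using Finset.strongInduction with
  | _ C ih =>
  intro W
  rcases C.eq_empty_or_nonempty with rfl | ⟨c, hc⟩
  · have hsub : genPat (∅ : Finset E) W ⊆ {fun _ => False} := by
      rintro p ⟨x, -, -, rfl⟩
      refine Set.mem_singleton_iff.mpr ?_
      funext c
      exact propext (by simp)
    calc (genPat (∅ : Finset E) W).ncard
        ≤ ({fun _ => False} : Set (E → Prop)).ncard :=
          Set.ncard_le_ncard hsub (Set.finite_singleton _)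
      _ = 1 := Set.ncard_singleton _
      _ ≤ Fb (∅ : Finset E).card (finrank ℝ W) := by simp [Fb]
  have hCcard : 1 ≤ C.card := Finset.card_pos.mpr ⟨c, hc⟩
  rcases Nat.lt_or_ge (finrank ℝ W) 2 with hd | hd
  · rcases (by omega : finrank ℝ W = 0 ∨ finrank ℝ W = 1) with h0 | h1
    · -- dimension 0
      have hW : W = ⊥ := Submodule.finrank_eq_zero.mp h0
      have hemp : genPat C W = ∅ := by
        ext p
        simp only [Set.mem_empty_iff_false, iff_false]
        rintro ⟨x, hxW, hgen, rfl⟩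
        rw [hW, Submodule.mem_bot] at hxW
        exact hgen c hc (by rw [hxW, inner_zero_left])
      rw [hemp, Set.ncard_empty]
      exact Nat.zero_le _
    · -- dimension 1
      rcases (genPat C W).eq_empty_or_nonempty with he | ⟨p₀, hp₀⟩
      · rw [he, Set.ncard_empty]; exact Nat.zero_le _
      obtain ⟨x, hxW, hxgen, rfl⟩ := hp₀
      have hx0 : x ≠ 0 := fun h => hxgen c hc (by rw [h, inner_zero_left])
      have hspan : (ℝ ∙ x) = W := by
        apply Submodule.eq_of_le_of_finrank_le
          ((Submodule.span_singleton_le_iff_mem x W).mpr hxW)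
        rw [h1, finrank_span_singleton hx0]
      have hsub : genPat C W ⊆
          {fun c' => (c' ∈ C ∧ 0 < ⟪x, c'⟫), fun c' => (c' ∈ C ∧ ⟪x, c'⟫ < 0)} := by
        rintro q ⟨y, hyW, hygen, rfl⟩
        rw [← hspan, Submodule.mem_span_singleton] at hyW
        obtain ⟨a, rfl⟩ := hyW
        have ha : a ≠ 0 := by
          intro h
          apply hygen c hc
          rw [h, zero_smul, inner_zero_left]
        rcases lt_or_gt_of_ne ha with haneg | hapos
        · right
          refine Set.mem_singleton_iff.mpr ?_
          funext c'
          refine propext ⟨fun ⟨h1', h2'⟩ => ⟨h1', ?_⟩, fun ⟨h1', h2'⟩ => ⟨h1', ?_⟩⟩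
          · rw [real_inner_smul_left] at h2'
            nlinarith
          · rw [real_inner_smul_left]
            nlinarith
        · left
          refine Set.mem_singleton_iff.mpr ?_
          funext c'
          refine propext ⟨fun ⟨h1', h2'⟩ => ⟨h1', ?_⟩, fun ⟨h1', h2'⟩ => ⟨h1', ?_⟩⟩
          · rw [real_inner_smul_left] at h2'
            nlinarith
          · rw [real_inner_smul_left]
            nlinarith
      calc (genPat C W).ncard ≤ _ :=
            Set.ncard_le_ncard hsub ((Set.finite_singleton _).insert _)
        _ ≤ 2 := by
            refine le_trans (Set.ncard_insert_le _ _) ?_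
            rw [Set.ncard_singleton]
        _ ≤ Fb C.card (finrank ℝ W) := by
            rw [h1, Fb_one_right (by omega)]
  -- main case : dimension ≥ 2
  set C' := C.erase c with hC'
  have hss : C' ⊂ C := Finset.erase_ssubset hc
  by_cases hperp : ∀ x ∈ W, ⟪x, c⟫ = 0
  · have hemp : genPat C W = ∅ := by
      ext p
      simp only [Set.mem_empty_iff_false, iff_false]
      rintro ⟨x, hxW, hgen, rfl⟩
      exact hgen c hc (hperp x hxW)
    rw [hemp, Set.ncard_empty]
    exact Nat.zero_le _
  push_neg at hperp
  obtain ⟨x₀, hx₀W, hx₀⟩ := hperp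
  set W' := W ⊓ (ℝ ∙ c)ᗮ with hW'def
  have hW'le : W' ≤ W := inf_le_left
  have hx₀W' : x₀ ∉ W' := by
    intro hx
    exact hx₀ (by
      rw [real_inner_comm]
      exact (Submodule.mem_orthogonal_singleton_iff_inner_right).mp hx.2)
  have hlt : W' < W := lt_of_le_of_ne hW'le (fun h => hx₀W' (by rw [h]; exact hx₀W))
  have hdr : finrank ℝ W' < finrank ℝ W := Submodule.finrank_lt_finrank_of_lt hlt
  -- restriction map
  set res : (E → Prop) → (E → Prop) := fun p c'' => c'' ∈ C' ∧ p c'' with hres_def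
  have hresA : ∀ p ∈ genPat C W, res p ∈ genPat C' W := by
    rintro p ⟨x, hxW, hgen, rfl⟩
    refine ⟨x, hxW, fun c'' hc'' => hgen c'' (Finset.mem_of_mem_erase hc''), ?_⟩
    funext c''
    exact propext ⟨fun ⟨h1, h2⟩ => ⟨h1, h2.2⟩,
      fun ⟨h1, h2⟩ => ⟨h1, Finset.mem_of_mem_erase h1, h2⟩⟩
  have hdet : ∀ p ∈ genPat C W, ∀ q ∈ genPat C W, res p = res q → (p c ↔ q c) → p = q := by
    rintro p ⟨x, hxW, hxgen, rfl⟩ q ⟨y, hyW, hygen, rfl⟩ hres hcc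
    funext c''
    by_cases h1 : c'' ∈ C
    · rcases eq_or_ne c'' c with rfl | hne
      · exact propext hcc
      · have h2 : c'' ∈ C' := Finset.mem_erase.mpr ⟨hne, h1⟩
        have h3 := iff_of_eq (congrFun hres c'')
        exact propext ⟨fun hx => (h3.mp ⟨h2, hx⟩).2, fun hy => (h3.mpr ⟨h2, hy⟩).2⟩
    · exact propext ⟨fun hx => absurd hx.1 h1, fun hy => absurd hy.1 h1⟩
  have hsplit : ∀ p ∈ genPat C W, p c →
      (∃ q ∈ genPat C W, res q = res p ∧ ¬ q c) → res p ∈ genPat C' W' := by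
    rintro p ⟨x, hxW, hxgen, rfl⟩ hpc ⟨q, ⟨y, hyW, hygen, rfl⟩, hres, hqc⟩
    have hxc : 0 < ⟪x, c⟫ := hpc.2
    have hyc : ⟪y, c⟫ < 0 := by
      have h1 : ¬ (0 < ⟪y, c⟫) := fun h => hqc ⟨hc, h⟩
      exact lt_of_le_of_ne (not_lt.mp h1) (hygen c hc)
    set s : ℝ := ⟪x, c⟫ / (⟪x, c⟫ - ⟪y, c⟫) with hs
    have hden : 0 < ⟪x, c⟫ - ⟪y, c⟫ := by linarith
    have hs0 : 0 < s := div_pos hxc hden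
    have hs1 : s < 1 := (div_lt_one hden).mpr (by linarith)
    set z : E := x + s • (y - x) with hz
    have hzW : z ∈ W := W.add_mem hxW (W.smul_mem _ (W.sub_mem hyW hxW))
    have hzin : ∀ c'' : E, ⟪z, c''⟫ = (1 - s) * ⟪x, c''⟫ + s * ⟪y, c''⟫ := by
      intro c''
      rw [hz, inner_add_left, real_inner_smul_left, inner_sub_left]
      ring
    have hzc : ⟪z, c⟫ = 0 := by
      rw [hzin c, hs]
      field_simp
      ring
    have hsign : ∀ c'' ∈ C', (⟪z, c''⟫ ≠ 0) ∧ (0 < ⟪z, c''⟫ ↔ 0 < ⟪x, c''⟫) := by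
      intro c'' hc''
      have hCm : c'' ∈ C := Finset.mem_of_mem_erase hc''
      have h3 := iff_of_eq (congrFun hres c'')
      have hiff : 0 < ⟪x, c''⟫ ↔ 0 < ⟪y, c''⟫ := by
        constructor
        · intro h
          exact (h3.mpr ⟨hc'', hCm, h⟩).2.2
        · intro h
          exact (h3.mp ⟨hc'', hCm, h⟩).2.2
      rcases lt_trichotomy (⟪x, c''⟫) 0 with hneg | h0 | hpos
      · have hyneg : ⟪y, c''⟫ < 0 := by
          rcases lt_trichotomy (⟪y, c''⟫) 0 with h | h | h
          · exact h
          · exact absurd h (hygen c'' hCm)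
          · exact absurd (hiff.mpr h) (by linarith)
        have hzneg : ⟪z, c''⟫ < 0 := by
          rw [hzin]
          nlinarith
        exact ⟨ne_of_lt hzneg, by constructor <;> intro h <;> linarith⟩
      · exact absurd h0 (hxgen c'' hCm)
      · have hypos : 0 < ⟪y, c''⟫ := hiff.mp hpos
        have hzpos : 0 < ⟪z, c''⟫ := by
          rw [hzin]
          nlinarith
        exact ⟨ne_of_gt hzpos, by constructor <;> intro h <;> linarith⟩
    refine ⟨z, ?_, fun c'' hc'' => (hsign c'' hc'').1, ?_⟩
    · exact Submodule.mem_inf.mpr ⟨hzW,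
        Submodule.mem_orthogonal_singleton_iff_inner_right.mpr
          (by rw [real_inner_comm]; exact hzc)⟩
    · funext c''
      by_cases h1 : c'' ∈ C'
      · exact propext ⟨fun ⟨ha, hb⟩ => ⟨h1, (hsign c'' h1).2.mpr hb.2⟩,
          fun ⟨ha, hb⟩ => ⟨h1, Finset.mem_of_mem_erase h1, (hsign c'' h1).2.mp hb⟩⟩
      · exact propext ⟨fun h => absurd h.1 h1, fun h => absurd h.1 h1⟩
  -- the counting step
  have hkey : (genPat C W).ncard ≤ (genPat C' W).ncard + (genPat C' W').ncard := by
    have hfinA := genPat_finite C' W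
    have hfinB := genPat_finite C' W'
    haveI := hfinA.to_subtype
    haveI := hfinB.to_subtype
    set Sib : (E → Prop) → Prop := fun p => ∃ q ∈ genPat C W, res q = res p ∧ ¬ q c
      with hSib
    set f : ↥(genPat C W) → ↥(genPat C' W) ⊕ ↥(genPat C' W') := fun pp =>
      if h : pp.1 c ∧ Sib pp.1 then Sum.inr ⟨res pp.1, hsplit pp.1 pp.2 h.1 h.2⟩
      else Sum.inl ⟨res pp.1, hresA pp.1 pp.2⟩ with hf_def
    have hinj : Function.Injective f := by
      rintro ⟨p, hp⟩ ⟨q, hq⟩ hf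
      simp only [hf_def] at hf
      refine Subtype.ext ?_
      split_ifs at hf with h1 h2 h2
      · simp only [Sum.inr.injEq, Subtype.mk.injEq] at hf
        exact hdet p hp q hq hf ⟨fun _ => h2.1, fun _ => h1.1⟩
      · simp only [Sum.inl.injEq, Subtype.mk.injEq] at hf
        refine hdet p hp q hq hf ?_
        constructor
        · intro hpc
          by_contra hqc
          exact h1 ⟨hpc, q, hq, hf.symm, hqc⟩
        · intro hqc
          by_contra hpc
          exact h2 ⟨hqc, p, hp, hf, hpc⟩
    calc (genPat C W).ncard = Nat.card ↥(genPat C W) := (Nat.card_coe_set_eq _).symm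
      _ ≤ Nat.card (↥(genPat C' W) ⊕ ↥(genPat C' W')) :=
          Nat.card_le_card_of_injective f hinj
      _ = (genPat C' W).ncard + (genPat C' W').ncard := by
          rw [Nat.card_sum, Nat.card_coe_set_eq, Nat.card_coe_set_eq]
  have hihA := ih C' hss W
  have hihB := ih C' hss W'
  have hmono : Fb C'.card (finrank ℝ W') ≤ Fb C'.card (finrank ℝ W - 1) :=
    Fb_mono_right (by omega)
  have hcc : C'.card = C.card - 1 := Finset.card_erase_of_mem hc
  have hrec := Fb_rec hCcard hd
  rw [hcc] at hihA hihB hmono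
  omega

lemma exists_generic (C : Finset E) : (∀ c ∈ C, c ≠ 0) → ∃ g : E, ∀ c ∈ C, ⟪g, c⟫ ≠ 0 := by
  classical
  induction C using Finset.induction_on with
  | empty => exact fun _ => ⟨0, by simp⟩
  | @insert a s ha ih =>
    intro hC
    obtain ⟨g, hg⟩ := ih (fun c hcs => hC c (Finset.mem_insert_of_mem hcs))
    have haa : a ≠ 0 := hC a (Finset.mem_insert_self a s)
    set T : Finset ℝ := (insert a s).image (fun c' => -⟪g, c'⟫ / ⟪a, c'⟫) with hT
    obtain ⟨t, ht⟩ := Infinite.exists_notMem_finset T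
    refine ⟨g + t • a, fun c' hc' h0 => ?_⟩
    rw [inner_add_left, real_inner_smul_left] at h0
    by_cases hac : ⟪a, c'⟫ = 0
    · rw [hac, mul_zero, add_zero] at h0
      rcases Finset.mem_insert.mp hc' with rfl | hmem
      · exact haa (inner_self_eq_zero.mp hac)
      · exact hg c' hmem h0
    · apply ht
      rw [hT]
      refine Finset.mem_image.mpr ⟨c', hc', ?_⟩
      field_simp
      linarith

end Stmt13Aux

set_option maxHeartbeats 1000000 in
open Stmt13Aux Module Finset RealInnerProductSpace in
/-- Covering lemma: for any k points V^(1), …, V^(k) of the scaled hypercube and any r ≥ 0,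
there is a set `cover` of at most 2^{k²} hypercube points such that every hypercube point V
within Euclidean distance r of span{V^(1), …, V^(k)} is within Hamming distance r²n of some
point of `cover`. -/
theorem stmt13 (n k : ℕ) (hn : 0 < n) (hk : 0 < k)
    (V : Fin k → EuclideanSpace ℝ (Fin n)) (hV : ∀ i, V i ∈ scaledCube n)
    (r : ℝ) (hr : 0 ≤ r) :
    ∃ cover : Finset (EuclideanSpace ℝ (Fin n)),
      (∀ Y ∈ cover, Y ∈ scaledCube n) ∧ cover.card ≤ 2 ^ (k ^ 2) ∧
      ∀ W ∈ scaledCube n,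
        infDist W (Submodule.span ℝ (Set.range V) : Set (EuclideanSpace ℝ (Fin n))) ≤ r →
        ∃ Y ∈ cover,
          ((Finset.univ.filter fun i => W i ≠ Y i).card : ℝ) ≤ r ^ 2 * n := by
  classical
  have hn' : (0:ℝ) < Real.sqrt n := Real.sqrt_pos.mpr (by exact_mod_cast hn)
  have hrt : (0:ℝ) < 1 / Real.sqrt n := by positivity
  set col : Fin n → EuclideanSpace ℝ (Fin k) := fun i => WithLp.toLp 2 (fun j => V j i) with hcol
  set C : Finset (EuclideanSpace ℝ (Fin k)) := Finset.image col Finset.univ with hCdef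
  have hfin := genPat_finite C (⊤ : Submodule ℝ (EuclideanSpace ℝ (Fin k)))
  set Yf : (EuclideanSpace ℝ (Fin k) → Prop) → EuclideanSpace ℝ (Fin n) :=
    fun q => (WithLp.toLp 2 (fun i => if q (col i) then 1 / Real.sqrt n else -(1 / Real.sqrt n)) :
      EuclideanSpace ℝ (Fin n)) with hYf
  set cover : Finset (EuclideanSpace ℝ (Fin n)) :=
    hfin.toFinset.image Yf with hcover
  have hinner : ∀ (x y : EuclideanSpace ℝ (Fin k)), ⟪x, y⟫ = ∑ j, x j * y j := by
    intro x y
    simp [PiLp.inner_apply, RCLike.inner_apply, conj_trivial]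
    exact Finset.sum_congr rfl fun _ _ => mul_comm _ _
  refine ⟨cover, ?_, ?_, ?_⟩
  · -- cover ⊆ cube
    intro Y hY
    rw [hcover] at hY
    obtain ⟨q, -, rfl⟩ := Finset.mem_image.mp hY
    intro i
    simp only [hYf]
    by_cases h : q (col i)
    · left; rw [if_pos h]
    · right; rw [if_neg h]
  · -- cardinality
    have h1 : cover.card ≤ hfin.toFinset.card := Finset.card_image_le
    have h2 : hfin.toFinset.card = (genPat C (⊤ : Submodule ℝ (EuclideanSpace ℝ (Fin k)))).ncard := by
      rw [Set.ncard_eq_toFinset_card _ hfin]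
    have h3 := genPat_ncard_le C (⊤ : Submodule ℝ (EuclideanSpace ℝ (Fin k)))
    have h4 : finrank ℝ (⊤ : Submodule ℝ (EuclideanSpace ℝ (Fin k))) = k := by
      rw [finrank_top, finrank_euclideanSpace_fin]
    rw [h4] at h3
    have hCc : C.card ≤ 2 ^ k := by
      have hinj : Set.InjOn (fun (c : EuclideanSpace ℝ (Fin k)) (j : Fin k) =>
          decide (0 < c j)) ↑C := by
        intro c1 h1' c2 h2' heq
        obtain ⟨i1, -, rfl⟩ := Finset.mem_image.mp h1'
        obtain ⟨i2, -, rfl⟩ := Finset.mem_image.mp h2'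
        ext j
        have e1 := congrFun heq j
        simp only [decide_eq_decide] at e1
        have hc1 : col i1 j = V j i1 := rfl
        have hc2 : col i2 j = V j i2 := rfl
        show col i1 j = col i2 j
        rw [hc1, hc2]
        rw [hc1, hc2] at e1
        rcases hV j i1 with ha | ha <;> rcases hV j i2 with hb | hb <;>
          rw [ha, hb] at e1 <;> rw [ha, hb]
        · exfalso; have := e1.mp hrt; linarith
        · exfalso; have := e1.mpr hrt; linarith
      have := Finset.card_le_card_of_injOn _ (fun c _ => Finset.mem_univ _) hinj
      calc C.card ≤ (Finset.univ : Finset (Fin k → Bool)).card := this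
        _ = 2 ^ k := by simp
    have h5 : Fb C.card k ≤ 2 ^ (k ^ 2) := by
      refine le_trans (Fb_mono_left hCc) ?_
      rcases eq_or_lt_of_le (show 1 ≤ k from hk) with h | h
      · rw [← h]
        norm_num [Fb_one_right]
      · have hk2 : 2 ≤ k := h
        rw [Fb_of_two_le (by positivity) hk2, ← pow_mul]
        calc 2 * 2 ^ (k * (k - 1)) = 2 ^ (k * (k - 1) + 1) := (pow_succ' 2 _).symm
          _ ≤ 2 ^ (k ^ 2) := by
              apply Nat.pow_le_pow_right (by norm_num)
              have : k * (k - 1) + k = k ^ 2 := by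
                cases k with
                | zero => simp
                | succ m => rw [Nat.succ_sub_one]; ring
              omega
    omega
  · -- covering property
    intro W hWc hWd
    have hclosed : IsClosed ((Submodule.span ℝ (Set.range V) :
        Submodule ℝ (EuclideanSpace ℝ (Fin n))) : Set (EuclideanSpace ℝ (Fin n))) :=
      Submodule.closed_of_finiteDimensional _
    obtain ⟨U, hUmem, hUdist⟩ :=
      hclosed.exists_infDist_eq_dist ⟨0, Submodule.zero_mem _⟩ W
    have hdU : dist W U ≤ r := by rw [← hUdist]; exact hWd
    obtain ⟨x, hx⟩ := (Submodule.mem_span_range_iff_exists_fun ℝ).mp hUmem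
    set xE : EuclideanSpace ℝ (Fin k) := WithLp.toLp 2 x with hxE
    have happ : ∀ i, (∑ j, x j • V j) i = ∑ j, x j * V j i := by
      intro i
      induction (Finset.univ : Finset (Fin k)) using Finset.induction_on with
      | empty => simp
      | @insert a s ha ih => rw [Finset.sum_insert ha, Finset.sum_insert ha, ← ih]; rfl
    have hUi : ∀ i, U i = ⟪xE, col i⟫ := by
      intro i
      rw [← hx, hinner, happ]
    have hCne : ∀ c ∈ C, c ≠ 0 := by
      intro c hcC h
      obtain ⟨i, -, rfl⟩ := Finset.mem_image.mp hcC
      have h0 : V ⟨0, hk⟩ i = (0 : EuclideanSpace ℝ (Fin k)) ⟨0, hk⟩ := congrArg (fun v => v ⟨0, hk⟩) h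
      have h0' : V ⟨0, hk⟩ i = 0 := by simpa using h0
      rcases hV ⟨0, hk⟩ i with ha | ha <;> rw [ha] at h0' <;> linarith
    obtain ⟨g, hg⟩ := exists_generic C hCne
    set s0 : Finset (Fin n) := Finset.univ.filter (fun i => U i ≠ 0) with hs0
    set δ : ℝ := if hs : s0.Nonempty then s0.inf' hs (fun i => |U i|) else 1 with hδ
    have hδpos : 0 < δ := by
      rw [hδ]
      split_ifs with h
      · rw [Finset.lt_inf'_iff]
        intro i hi
        have := (Finset.mem_filter.mp hi).2
        positivity
      · exact one_pos
    have hδle : ∀ i, U i ≠ 0 → δ ≤ |U i| := by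
      intro i hi
      have hmem : i ∈ s0 := Finset.mem_filter.mpr ⟨Finset.mem_univ _, hi⟩
      rw [hδ, dif_pos ⟨i, hmem⟩]
      exact Finset.inf'_le _ hmem
    have hnne : (Finset.univ : Finset (Fin n)).Nonempty := ⟨⟨0, hn⟩, Finset.mem_univ _⟩
    set M : ℝ := Finset.univ.sup' hnne (fun i => |⟪g, col i⟫|) + 1 with hM
    have hMpos : 0 < M := by
      have h0 : (0:ℝ) ≤ |⟪g, col ⟨0, hn⟩⟫| := abs_nonneg _
      have h1 := Finset.le_sup' (fun i => |⟪g, col i⟫|) (Finset.mem_univ (⟨0, hn⟩ : Fin n))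
      rw [hM]
      linarith
    have hMbd : ∀ i, |⟪g, col i⟫| < M := by
      intro i
      have h1 := Finset.le_sup' (fun i => |⟪g, col i⟫|) (Finset.mem_univ i)
      rw [hM]
      linarith
    set ε : ℝ := δ / M with hε
    have hεpos : 0 < ε := div_pos hδpos hMpos
    set xE' : EuclideanSpace ℝ (Fin k) := xE + ε • g with hxE'
    have hpert : ∀ i, |ε * ⟪g, col i⟫| < δ := by
      intro i
      rw [abs_mul, abs_of_pos hεpos]
      calc ε * |⟪g, col i⟫| < ε * M := by
            exact mul_lt_mul_of_pos_left (hMbd i) hεpos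
        _ = δ := by rw [hε]; field_simp
    have hin' : ∀ i, ⟪xE', col i⟫ = U i + ε * ⟪g, col i⟫ := by
      intro i
      rw [hxE', inner_add_left, real_inner_smul_left, ← hUi]
    have hgen' : ∀ i, ⟪xE', col i⟫ ≠ 0 := by
      intro i
      rw [hin' i]
      by_cases hU0 : U i = 0
      · rw [hU0, zero_add]
        exact mul_ne_zero (ne_of_gt hεpos)
          (hg (col i) (Finset.mem_image.mpr ⟨i, Finset.mem_univ _, rfl⟩))
      · have h1 := hpert i
        have h2 := hδle i hU0
        intro h
        have h3 : ε * ⟪g, col i⟫ = -U i := by linarith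
        rw [h3, abs_neg] at h1
        linarith
    have hsgn : ∀ i, U i ≠ 0 → (0 < ⟪xE', col i⟫ ↔ 0 < U i) := by
      intro i hU0
      have h1 := hpert i
      have h2 := hδle i hU0
      rw [abs_lt] at h1
      rw [hin' i]
      rcases lt_or_gt_of_ne hU0 with hneg | hpos
      · rw [abs_of_neg hneg] at h2
        constructor <;> intro h <;> linarith
      · rw [abs_of_pos hpos] at h2
        constructor <;> intro h <;> linarith
    set p : EuclideanSpace ℝ (Fin k) → Prop := fun c => (c ∈ C ∧ 0 < ⟪xE', c⟫) with hp
    have hpmem : p ∈ genPat C (⊤ : Submodule ℝ (EuclideanSpace ℝ (Fin k))) := by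
      refine ⟨xE', Submodule.mem_top, ?_, rfl⟩
      intro c hcC
      obtain ⟨i, -, rfl⟩ := Finset.mem_image.mp hcC
      exact hgen' i
    set Y : EuclideanSpace ℝ (Fin n) := Yf p with hYdef
    have hYmem : Y ∈ cover := by
      rw [hcover]
      exact Finset.mem_image.mpr ⟨p, hfin.mem_toFinset.mpr hpmem, rfl⟩
    refine ⟨Y, hYmem, ?_⟩
    set D := Finset.univ.filter (fun i => W i ≠ Y i) with hD
    have hYtrue : ∀ i, p (col i) → Y i = 1 / Real.sqrt n := by
      intro i h
      rw [hYdef]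
      simp only [hYf]
      rw [if_pos h]
    have hYfalse : ∀ i, ¬ p (col i) → Y i = -(1 / Real.sqrt n) := by
      intro i h
      rw [hYdef]
      simp only [hYf]
      rw [if_neg h]
    have hlow : ∀ i ∈ D, (1 / Real.sqrt n)^2 ≤ (W i - U i)^2 := by
      intro i hi
      have hWY : W i ≠ Y i := (Finset.mem_filter.mp hi).2
      have hpcol : p (col i) ↔ 0 < ⟪xE', col i⟫ :=
        ⟨fun h => h.2, fun h => ⟨Finset.mem_image.mpr ⟨i, Finset.mem_univ _, rfl⟩, h⟩⟩
      rcases lt_trichotomy (U i) 0 with hU | hU | hU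
      · have hnp : ¬ p (col i) := by
          intro h
          have := (hsgn i (ne_of_lt hU)).mp (hpcol.mp h)
          linarith
        have hYv : Y i = -(1 / Real.sqrt n) := hYfalse i hnp
        have hWv : W i = 1 / Real.sqrt n := by
          rcases hWc i with h | h
          · exact h
          · exact absurd (h.trans hYv.symm) hWY
        rw [hWv]
        nlinarith
      · rw [hU, sub_zero]
        rcases hWc i with h | h <;> rw [h] <;> nlinarith
      · have hpp : p (col i) := hpcol.mpr ((hsgn i (ne_of_gt hU)).mpr hU)
        have hYv : Y i = 1 / Real.sqrt n := hYtrue i hpp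
        have hWv : W i = -(1 / Real.sqrt n) := by
          rcases hWc i with h | h
          · exact absurd (h.trans hYv.symm) hWY
          · exact h
        rw [hWv]
        nlinarith
    have hsum : (D.card : ℝ) * (1 / Real.sqrt n)^2 ≤ ∑ i, (W i - U i)^2 := by
      calc (D.card : ℝ) * (1 / Real.sqrt n)^2 = ∑ _i ∈ D, (1 / Real.sqrt n)^2 := by
            rw [Finset.sum_const, nsmul_eq_mul]
        _ ≤ ∑ i ∈ D, (W i - U i)^2 := Finset.sum_le_sum hlow
        _ ≤ ∑ i, (W i - U i)^2 :=
            Finset.sum_le_sum_of_subset_of_nonneg (Finset.filter_subset _ _)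
              (fun i _ _ => sq_nonneg _)
    have hdist2 : ∑ i, (W i - U i)^2 ≤ r^2 := by
      have h1 : dist W U ^ 2 ≤ r^2 := by
        apply pow_le_pow_left₀ dist_nonneg hdU
      rw [EuclideanSpace.dist_eq, Real.sq_sqrt (by positivity)] at h1
      calc ∑ i, (W i - U i)^2 = ∑ i, dist (W i) (U i)^2 := by
            refine Finset.sum_congr rfl fun i _ => ?_
            rw [Real.dist_eq, sq_abs]
        _ ≤ r ^ 2 := h1
    have hfrac : (1 / Real.sqrt n)^2 = 1 / (n:ℝ) := by
      rw [div_pow, one_pow, Real.sq_sqrt (Nat.cast_nonneg n)]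
    have hmain : (D.card : ℝ) * (1 / (n:ℝ)) ≤ r^2 := by
      rw [← hfrac]
      linarith
    have hn0 : (0:ℝ) < n := by exact_mod_cast hn
    calc ((Finset.univ.filter fun i => W i ≠ Y i).card : ℝ)
        = (D.card : ℝ) * (1 / (n:ℝ)) * n := by
          rw [← hD]
          rw [mul_assoc, one_div_mul_cancel hn0.ne', mul_one]
      _ ≤ r^2 * n := mul_le_mul_of_nonneg_right hmain hn0.le
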